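/- Suppose X and Z are real numbers, θ, θ* are vectors in R^d with inner products satisfying 2|⟨X, θ* - θ⟩| ≤ |⟨X, θ*⟩|, |⟨X, θ*⟩| ≥ 2τ, and |Z| ≤ τ for some τ > 0, and let Y = ⟨X, θ*⟩ + Z. Then |tanh(Y·⟨X,θ⟩) - tanh(Y·⟨X,θ*⟩)| ≤ exp(-τ²). -/

import Mathlib

lemma tanh_formula (x : ℝ) :
    Real.tanh x = (Real.exp x - Real.exp (-x)) / (Real.exp x + Real.exp (-x)) := by
  rw [Real.tanh_eq_sinh_div_cosh, Real.sinh_eq, Real.cosh_eq]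
  have h : Real.exp x + Real.exp (-x) > 0 := by positivity
  field_simp

lemma tanh_mono {s w : ℝ} (h : s ≤ w) : Real.tanh s ≤ Real.tanh w := by
  rw [tanh_formula, tanh_formula]
  have hc : (0:ℝ) < Real.exp s + Real.exp (-s) := by positivity
  have ha : (0:ℝ) < Real.exp w + Real.exp (-w) := by positivity
  rw [div_le_div_iff₀ hc ha]
  have h1 : Real.exp s ≤ Real.exp w := Real.exp_le_exp.2 h
  have h2 : Real.exp (-w) ≤ Real.exp (-s) := Real.exp_le_exp.2 (by linarith)
  have h3 : (0:ℝ) < Real.exp s := Real.exp_pos _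
  have h4 : (0:ℝ) < Real.exp (-w) := Real.exp_pos _
  nlinarith [mul_le_mul h1 h2 h4.le (Real.exp_pos w).le]

lemma tanh_lt_one' (w : ℝ) : Real.tanh w < 1 := by
  rw [tanh_formula]
  have ha : (0:ℝ) < Real.exp w + Real.exp (-w) := by positivity
  rw [div_lt_one ha]
  have := Real.exp_pos (-w); linarith

lemma one_sub_tanh_le (s : ℝ) : 1 - Real.tanh s ≤ Real.exp (-s) := by
  rw [tanh_formula]
  have hc : (0:ℝ) < Real.exp s + Real.exp (-s) := by positivity
  have h3 : (0:ℝ) < Real.exp s := Real.exp_pos _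
  have h4 : (0:ℝ) < Real.exp (-s) := Real.exp_pos _
  have hprod : Real.exp s * Real.exp (-s) = 1 := by
    rw [← Real.exp_add]; simp
  rw [sub_div' (ne_of_gt hc)] at *
  rw [div_le_iff₀ hc]
  nlinarith [sq_nonneg (Real.exp s - 1)]

lemma tanh_diff_le {s u v : ℝ} (hu : s ≤ u) (hv : s ≤ v) :
    |Real.tanh u - Real.tanh v| ≤ Real.exp (-s) := by
  have h1 := tanh_mono hu
  have h2 := tanh_mono hv
  have h3 := tanh_lt_one' u
  have h4 := tanh_lt_one' v
  have h5 := one_sub_tanh_le s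
  rw [abs_sub_le_iff]
  constructor <;> linarith

theorem good_event_small_diff {d : ℕ} (X θ θs : EuclideanSpace ℝ (Fin d))
    (τ Z Y : ℝ) (hτ : 0 < τ)
    (h1 : 2 * |(inner ℝ X (θs - θ) : ℝ)| ≤ |(inner ℝ X θs : ℝ)|)
    (h2 : 2 * τ ≤ |(inner ℝ X θs : ℝ)|)
    (h3 : |Z| ≤ τ)
    (hY : Y = (inner ℝ X θs : ℝ) + Z) :
    |Real.tanh (Y * (inner ℝ X θ : ℝ)) - Real.tanh (Y * (inner ℝ X θs : ℝ))|
      ≤ Real.exp (-τ ^ 2) := by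
  set a : ℝ := inner ℝ X θs with ha
  set b : ℝ := inner ℝ X θ with hb
  have hsub : (inner ℝ X (θs - θ) : ℝ) = a - b := by
    rw [inner_sub_right]
  rw [hsub] at h1
  have habs : |Z| ≤ τ := h3
  have hZ1 : -τ ≤ Z := (abs_le.1 h3).1
  have hZ2 : Z ≤ τ := (abs_le.1 h3).2
  apply tanh_diff_le
  · -- τ^2 ≤ Y * b
    rcases le_or_gt 0 a with hpos | hneg
    · have haa : |a| = a := abs_of_nonneg hpos
      rw [haa] at h1 h2
      have hab : |a - b| ≤ a / 2 := by linarith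
      have hb' : a / 2 ≤ b := by
        have := (abs_le.1 hab).2; linarith
      have hY' : τ ≤ Y := by rw [hY]; linarith
      have hbτ : τ ≤ b := by linarith
      nlinarith
    · have haa : |a| = -a := abs_of_neg hneg
      rw [haa] at h1 h2
      have hab : |a - b| ≤ -a / 2 := by linarith
      have hb' : b ≤ a / 2 := by
        have := (abs_le.1 hab).1; linarith
      have hY' : Y ≤ -τ := by rw [hY]; linarith
      have hbτ : b ≤ -τ := by linarith
      nlinarith
  · -- τ^2 ≤ Y * a
    rcases le_or_gt 0 a with hpos | hneg
    · have haa : |a| = a := abs_of_nonneg hpos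
      rw [haa] at h2
      have hY' : τ ≤ Y := by rw [hY]; linarith
      nlinarith
    · have haa : |a| = -a := abs_of_neg hneg
      rw [haa] at h2
      have hY' : Y ≤ -τ := by rw [hY]; linarith
      nlinarith
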